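/- arXiv:math-ph/0211062 — 4 statements merged into one kernel-verified Lean document; each statement's English description precedes it below -/
import Mathlib

section
/- Fix α ∈ (0, log 3/log 2 − 1). There exist constants J₀ > 0 and L₀ such that for all L ≥ 1, (2/(α(1−α))) · ( −2[(2L−1)^α − (L−1)^α] + (L+1)^α − 1 ) + 2(J₀ − 1) ≥ ζ_α L^α, where ζ_α = 1 − 2(2^α − 1) > 0; in particular the inequality holds for all L once J₀ is chosen large enough. -/
/-- Subadditivity of `x ↦ x ^ α` for `0 ≤ α ≤ 1` in the form `(x+1)^α ≤ x^α + 1`. -/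
lemma rpow_add_one_le (x α : ℝ) (hx : 0 ≤ x) (h0 : 0 ≤ α) (h1 : α ≤ 1) :
    (x + 1) ^ α ≤ x ^ α + 1 := by
  have h := NNReal.coe_le_coe.mpr (NNReal.rpow_add_le_add_rpow x.toNNReal 1 h0 h1)
  push_cast [NNReal.coe_rpow] at h
  rw [Real.coe_toNNReal x hx, Real.one_rpow] at h
  exact h

/-- Final step of the lower bound `W_α(L) ≥ ζ_α L^α`: for `J₀` large enough the
explicit expression dominates `ζ_α L^α` for every `L ≥ 1`. -/
theorem final_lower_bound (α : ℝ) (hα0 : 0 < α) (hα1 : α < Real.log 3 / Real.log 2 - 1) :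
    ∃ J₀ : ℝ, 0 < J₀ ∧ ∀ L : ℕ, 1 ≤ L →
      (2 / (α * (1 - α))) *
          (-2 * ((2 * (L : ℝ) - 1) ^ α - ((L : ℝ) - 1) ^ α) + ((L : ℝ) + 1) ^ α - 1)
        + 2 * (J₀ - 1)
      ≥ (1 - 2 * ((2 : ℝ) ^ α - 1)) * (L : ℝ) ^ α := by
  have hlog2 : (0:ℝ) < Real.log 2 := Real.log_pos (by norm_num)
  -- α < 1
  have hα1' : α < 1 := by
    have h34 : Real.log 3 < 2 * Real.log 2 := by
      have : Real.log 3 < Real.log 4 := Real.log_lt_log (by norm_num) (by norm_num)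
      have h4 : Real.log 4 = 2 * Real.log 2 := by
        rw [show (4:ℝ) = 2 ^ 2 by norm_num, Real.log_pow]; push_cast; ring
      linarith
    have : Real.log 3 / Real.log 2 < 2 := by
      rw [div_lt_iff₀ hlog2]; linarith
    linarith
  have hαα : 0 < α * (1 - α) := mul_pos hα0 (by linarith)
  set c : ℝ := 2 / (α * (1 - α)) with hc
  have hcpos : 0 < c := div_pos (by norm_num) hαα
  -- c ≥ 1 since α(1-α) ≤ 1/4 ≤ 2
  have hc1 : 1 ≤ c := by
    rw [hc, le_div_iff₀ hαα]
    nlinarith [sq_nonneg (α - 1/2)]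
  -- ζ := 1 - 2(2^α - 1) = 3 - 2·2^α > 0
  have h2α : (2:ℝ) ^ α < 3 / 2 := by
    have : α * Real.log 2 < Real.log (3/2) := by
      rw [Real.log_div (by norm_num) (by norm_num)]
      have h := (lt_div_iff₀ hlog2).mp (by linarith : α + 1 < Real.log 3 / Real.log 2)
      linarith
    calc (2:ℝ) ^ α = Real.exp (α * Real.log 2) := by
          rw [Real.rpow_def_of_pos (by norm_num), mul_comm]
      _ < Real.exp (Real.log (3/2)) := Real.exp_lt_exp.mpr this
      _ = 3/2 := Real.exp_log (by norm_num)
  set ζ : ℝ := 1 - 2 * ((2:ℝ) ^ α - 1) with hζ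
  have hζpos : 0 < ζ := by rw [hζ]; linarith
  refine ⟨1 + 3 * c / 2, by positivity, fun L hL => ?_⟩
  have hL1 : (1:ℝ) ≤ (L:ℝ) := by exact_mod_cast hL
  have hLpos : (0:ℝ) ≤ (L:ℝ) := by linarith
  set A : ℝ := (L:ℝ) ^ α with hA
  have hA1 : 1 ≤ A := Real.one_le_rpow hL1 hα0.le
  -- Bound 1 : (2L-1)^α ≤ 2^α * A
  have hb1 : (2 * (L:ℝ) - 1) ^ α ≤ (2:ℝ) ^ α * A := by
    rw [hA, ← Real.mul_rpow (by norm_num) hLpos]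
    exact Real.rpow_le_rpow (by linarith) (by linarith) hα0.le
  -- Bound 2 : A ≤ ((L:ℝ)-1)^α + 1
  have hb2 : A ≤ ((L:ℝ) - 1) ^ α + 1 := by
    have := rpow_add_one_le ((L:ℝ) - 1) α (by linarith) hα0.le hα1'.le
    rw [hA]
    calc (L:ℝ) ^ α = ((L:ℝ) - 1 + 1) ^ α := by ring_nf
      _ ≤ ((L:ℝ) - 1) ^ α + 1 := this
  -- Bound 3 : A ≤ ((L:ℝ)+1)^α
  have hb3 : A ≤ ((L:ℝ) + 1) ^ α :=
    Real.rpow_le_rpow hLpos (by linarith) hα0.le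
  -- inner expression bound
  have hinner : -2 * ((2 * (L:ℝ) - 1) ^ α - ((L:ℝ) - 1) ^ α) + ((L:ℝ) + 1) ^ α - 1
      ≥ ζ * A - 3 := by
    rw [hζ]; nlinarith
  have key : c * (-2 * ((2 * (L:ℝ) - 1) ^ α - ((L:ℝ) - 1) ^ α) + ((L:ℝ) + 1) ^ α - 1)
      ≥ c * (ζ * A - 3) := by
    exact mul_le_mul_of_nonneg_left hinner hcpos.le
  have hζA : ζ * A ≥ ζ := by nlinarith
  have hζA0 : 0 ≤ ζ * A := mul_nonneg hζpos.le (by linarith)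
  nlinarith [key, hζA0, mul_nonneg (by linarith : (0:ℝ) ≤ c - 1) hζA0]
end

section
/- For α = 0 (so J(n) = n^{−2} for n > 1), there exists J₁ > 0 such that for all integers L ≥ 1, W_0(L) ≥ 2 ln L + 8, where W_0(L) = Σ_{x=1}^{L}( Σ_{y∈[L+1,2L]∪[−L+1,0]} J(|x−y|) − Σ_{y∈[2L+1,∞)∪(−∞,−L]} J(|x−y|) ). -/
open Finset

/-- Telescoping sum of `1/(a+i) - 1/(a+i+1)` over `range m`. -/
lemma tel_sum (a : ℝ) (m : ℕ) :
    ∑ i ∈ range m, ((1 : ℝ) / (a + i) - 1 / (a + i + 1)) = 1 / a - 1 / (a + m) := by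
  induction m with
  | zero => simp
  | succ m ih =>
      rw [Finset.sum_range_succ, ih]
      push_cast
      ring

/-- Harmonic sum dominates `log (L+1)`. -/
lemma log_le_harmonic (L : ℕ) : Real.log (L + 1) ≤ ∑ x ∈ Icc 1 L, (1 : ℝ) / x := by
  induction L with
  | zero => simp
  | succ L ih =>
      rw [Finset.sum_Icc_succ_top (by omega : 1 ≤ L + 1)]
      have hlog : Real.log ((L : ℝ) + 1 + 1) - Real.log ((L : ℝ) + 1)
          ≤ 1 / ((L : ℝ) + 1) := by
        rw [← Real.log_div (by positivity) (by positivity)]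
        have h := Real.log_le_sub_one_of_pos (x := ((L : ℝ) + 1 + 1) / ((L : ℝ) + 1))
          (by positivity)
        have heq : ((L : ℝ) + 1 + 1) / ((L : ℝ) + 1) - 1 = 1 / ((L : ℝ) + 1) := by
          field_simp
          ring
        linarith
      push_cast
      push_cast at ih
      linarith

/-- Reflection of the harmonic sum. -/
lemma reflect_sum (L : ℕ) :
    ∑ x ∈ Icc 1 L, (1 : ℝ) / ((L : ℝ) + 1 - x) = ∑ x ∈ Icc 1 L, (1 : ℝ) / x := by
  refine Finset.sum_nbij' (i := fun x => L + 1 - x) (j := fun x => L + 1 - x)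
    ?_ ?_ ?_ ?_ ?_
  · intro a ha; simp only [mem_Icc] at *; omega
  · intro a ha; simp only [mem_Icc] at *; omega
  · intro a ha; simp only [mem_Icc] at *; omega
  · intro a ha; simp only [mem_Icc] at *; omega
  · intro a ha
    simp only [mem_Icc] at ha
    rw [Nat.cast_sub (by omega : a ≤ L + 1)]
    push_cast
    ring_nf

/-- For `α = 0` (inverse square interaction), there exists `J₁ > 0` so that the
block-flip energy `W_0(L)` is at least `2 ln L + 8` for every `L ≥ 1`. -/
theorem W_zero_log_lower_bound :
    ∃ J₁ : ℝ, 0 < J₁ ∧ ∀ J : ℕ → ℝ, J 1 = J₁ →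
      (∀ n : ℕ, 1 < n → J n = (n : ℝ) ^ (-(2 : ℝ))) →
      ∀ L : ℕ, 1 ≤ L →
        ∑ x ∈ Icc 1 L,
          ((∑ y ∈ Icc (L + 1) (2 * L), J (y - x))
            + (∑ z ∈ Icc 0 (L - 1), J (x + z))
            - (∑' k : ℕ, J (2 * L + 1 + k - x))
            - (∑' k : ℕ, J (x + L + k)))
        ≥ 2 * Real.log L + 8 := by
  refine ⟨7, by norm_num, ?_⟩
  intro J hJ1 hJ L hL
  -- rewrite rpow as 1/n^2
  have hrpow : ∀ n : ℕ, 1 < n → J n = 1 / ((n : ℝ)) ^ 2 := by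
    intro n hn
    rw [hJ n hn, Real.rpow_neg (by positivity), show (2 : ℝ) = ((2 : ℕ) : ℝ) by norm_num,
      Real.rpow_natCast, one_div]
  -- termwise lower bound on J
  have hJlb : ∀ n : ℕ, 1 ≤ n →
      (1 : ℝ) / n - 1 / ((n : ℝ) + 1) + (if n = 1 then (6 : ℝ) else 0) ≤ J n := by
    intro n hn
    rcases eq_or_lt_of_le hn with h | h
    · rw [← h]
      rw [hJ1]
      norm_num
    · rw [hrpow n h, if_neg (by omega)]
      have hn2 : (2 : ℝ) ≤ (n : ℝ) := by exact_mod_cast h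
      have h0 : (0 : ℝ) < (n : ℝ) := by linarith
      have h1 : (0 : ℝ) < (n : ℝ) + 1 := by linarith
      have heq : (1 : ℝ) / n - 1 / ((n : ℝ) + 1) = 1 / ((n : ℝ) * ((n : ℝ) + 1)) := by
        field_simp
        ring
      rw [heq, add_zero]
      apply one_div_le_one_div_of_le (by positivity)
      nlinarith
  -- lower bound for a block sum of J
  have key : ∀ a m : ℕ, 1 ≤ a → 1 ≤ m →
      (1 : ℝ) / a - 1 / ((a : ℝ) + m) + (if a = 1 then (6 : ℝ) else 0)
        ≤ ∑ i ∈ range m, J (a + i) := by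
    intro a m ha hm
    have step : ∑ i ∈ range m,
        ((1 : ℝ) / ((a : ℝ) + i) - 1 / ((a : ℝ) + i + 1)
          + (if a + i = 1 then (6 : ℝ) else 0)) ≤ ∑ i ∈ range m, J (a + i) := by
      apply Finset.sum_le_sum
      intro i _
      have := hJlb (a + i) (by omega)
      have hc : ((a + i : ℕ) : ℝ) = (a : ℝ) + i := by push_cast; ring
      rw [hc] at this
      exact this
    have hsplit : ∑ i ∈ range m,
        ((1 : ℝ) / ((a : ℝ) + i) - 1 / ((a : ℝ) + i + 1)
          + (if a + i = 1 then (6 : ℝ) else 0))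
        = (1 / (a : ℝ) - 1 / ((a : ℝ) + m))
          + ∑ i ∈ range m, (if a + i = 1 then (6 : ℝ) else 0) := by
      rw [Finset.sum_add_distrib, tel_sum]
    have hind : ∑ i ∈ range m, (if a + i = 1 then (6 : ℝ) else 0)
        = (if a = 1 then (6 : ℝ) else 0) := by
      rcases eq_or_ne a 1 with rfl | h
      · have : ∀ i : ℕ, (if 1 + i = 1 then (6 : ℝ) else 0)
            = (if i = 0 then (6 : ℝ) else 0) := by
          intro i
          rcases eq_or_ne i 0 with rfl | hi
          · simp
          · rw [if_neg (by omega), if_neg hi]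
        simp only [this]
        rw [Finset.sum_ite_eq' (range m) 0 (fun _ => (6 : ℝ))]
        rw [if_pos (Finset.mem_range.mpr (by omega))]
        simp
      · rw [if_neg h]
        apply Finset.sum_eq_zero
        intro i _
        rw [if_neg (by omega)]
    rw [hsplit, hind] at step
    linarith
  -- tail bound
  have tail : ∀ m : ℕ, 2 ≤ m → ∑' k : ℕ, J (m + k) ≤ 1 / ((m : ℝ) - 1) := by
    intro m hm
    have hm2 : (2 : ℝ) ≤ (m : ℝ) := by exact_mod_cast hm
    have hrw : ∀ k : ℕ, J (m + k) = 1 / ((m : ℝ) + k) ^ 2 := by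
      intro k
      rw [hrpow (m + k) (by omega)]
      push_cast
      ring_nf
    rw [tsum_congr hrw]
    apply Real.tsum_le_of_sum_range_le (fun k => by positivity)
    intro N
    have hbound : ∑ k ∈ range N, (1 : ℝ) / ((m : ℝ) + k) ^ 2
        ≤ ∑ k ∈ range N, ((1 : ℝ) / (((m : ℝ) - 1) + k) - 1 / (((m : ℝ) - 1) + k + 1)) := by
      apply Finset.sum_le_sum
      intro k _
      have hk : (0 : ℝ) ≤ (k : ℝ) := Nat.cast_nonneg k
      have hb1 : (0 : ℝ) < (m : ℝ) - 1 + k := by linarith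
      have hb2 : (0 : ℝ) < (m : ℝ) + k := by linarith
      have heq : (1 : ℝ) / (((m : ℝ) - 1) + k) - 1 / (((m : ℝ) - 1) + k + 1)
          = 1 / ((((m : ℝ) - 1) + k) * ((m : ℝ) + k)) := by
        have : ((m : ℝ) - 1) + k + 1 = (m : ℝ) + k := by ring
        rw [this]
        field_simp
        ring
      rw [heq]
      apply one_div_le_one_div_of_le (by positivity)
      nlinarith
    have htel := tel_sum ((m : ℝ) - 1) N
    have hN : (0 : ℝ) ≤ 1 / ((m : ℝ) - 1 + N) := by
      apply one_div_nonneg.mpr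
      have : (0 : ℝ) ≤ (N : ℝ) := Nat.cast_nonneg N
      linarith
    linarith
  -- per-x lower bound
  set g : ℕ → ℝ := fun x =>
    ((1 : ℝ) / ((L : ℝ) + 1 - x) - 1 / (2 * (L : ℝ) + 1 - x) + (if x = L then (6 : ℝ) else 0))
    + ((1 : ℝ) / x - 1 / ((x : ℝ) + L) + (if x = 1 then (6 : ℝ) else 0))
    - 1 / (2 * (L : ℝ) - x) - 1 / ((x : ℝ) + L - 1) with hg
  have hterm : ∀ x ∈ Icc 1 L, g x ≤
      (∑ y ∈ Icc (L + 1) (2 * L), J (y - x))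
        + (∑ z ∈ Icc 0 (L - 1), J (x + z))
        - (∑' k : ℕ, J (2 * L + 1 + k - x))
        - (∑' k : ℕ, J (x + L + k)) := by
    intro x hx
    simp only [mem_Icc] at hx
    obtain ⟨hx1, hxL⟩ := hx
    have hxR : (1 : ℝ) ≤ (x : ℝ) := by exact_mod_cast hx1
    have hLR : (x : ℝ) ≤ (L : ℝ) := by exact_mod_cast hxL
    -- A
    have hA : (1 : ℝ) / ((L : ℝ) + 1 - x) - 1 / (2 * (L : ℝ) + 1 - x)
        + (if x = L then (6 : ℝ) else 0) ≤ ∑ y ∈ Icc (L + 1) (2 * L), J (y - x) := by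
      have hre : ∑ y ∈ Icc (L + 1) (2 * L), J (y - x)
          = ∑ i ∈ range L, J ((L + 1 - x) + i) := by
        rw [← Finset.Ico_add_one_right_eq_Icc, Finset.sum_Ico_eq_sum_range]
        have h2 : 2 * L + 1 - (L + 1) = L := by omega
        rw [h2]
        exact Finset.sum_congr rfl (fun i _ => by congr 1; omega)
      rw [hre]
      have := key (L + 1 - x) L (by omega) hL
      have hc : ((L + 1 - x : ℕ) : ℝ) = (L : ℝ) + 1 - x := by
        rw [Nat.cast_sub (by omega)]; push_cast; ring
      rw [hc] at this
      have hc2 : (L : ℝ) + 1 - x + L = 2 * (L : ℝ) + 1 - x := by ring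
      rw [hc2] at this
      have hif : (if L + 1 - x = 1 then (6 : ℝ) else 0) = (if x = L then (6 : ℝ) else 0) := by
        rcases eq_or_ne x L with rfl | h
        · rw [if_pos (by omega), if_pos rfl]
        · rw [if_neg (by omega), if_neg h]
      rw [hif] at this
      exact this
    -- B
    have hB : (1 : ℝ) / x - 1 / ((x : ℝ) + L) + (if x = 1 then (6 : ℝ) else 0)
        ≤ ∑ z ∈ Icc 0 (L - 1), J (x + z) := by
      have hre : ∑ z ∈ Icc 0 (L - 1), J (x + z) = ∑ i ∈ range L, J (x + i) := by
        rw [← Finset.Ico_add_one_right_eq_Icc, Finset.sum_Ico_eq_sum_range]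
        have h2 : L - 1 + 1 - 0 = L := by omega
        rw [h2]
        exact Finset.sum_congr rfl (fun i _ => by congr 1; omega)
      rw [hre]
      exact key x L hx1 hL
    -- C
    have hC : ∑' k : ℕ, J (2 * L + 1 + k - x) ≤ 1 / (2 * (L : ℝ) - x) := by
      have hre : ∀ k : ℕ, J (2 * L + 1 + k - x) = J ((2 * L + 1 - x) + k) := by
        intro k; congr 1; omega
      rw [tsum_congr hre]
      have := tail (2 * L + 1 - x) (by omega)
      have hc : ((2 * L + 1 - x : ℕ) : ℝ) - 1 = 2 * (L : ℝ) - x := by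
        rw [Nat.cast_sub (by omega)]; push_cast; ring
      rw [hc] at this
      exact this
    -- D
    have hD : ∑' k : ℕ, J (x + L + k) ≤ 1 / ((x : ℝ) + L - 1) := by
      have := tail (x + L) (by omega)
      have hc : ((x + L : ℕ) : ℝ) - 1 = (x : ℝ) + L - 1 := by push_cast; ring
      rw [hc] at this
      exact this
    rw [hg]
    dsimp only
    linarith
  -- assemble
  have hsum := Finset.sum_le_sum hterm
  have hLpos : (0 : ℝ) < (L : ℝ) := by exact_mod_cast hL
  -- lower bound for the sum of g
  have hgsum : 2 * Real.log L + 8 ≤ ∑ x ∈ Icc 1 L, g x := by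
    have hsplit : ∑ x ∈ Icc 1 L, g x
        = (∑ x ∈ Icc 1 L, (1 : ℝ) / ((L : ℝ) + 1 - x))
          - (∑ x ∈ Icc 1 L, (1 : ℝ) / (2 * (L : ℝ) + 1 - x))
          + (∑ x ∈ Icc 1 L, (if x = L then (6 : ℝ) else 0))
          + (∑ x ∈ Icc 1 L, (1 : ℝ) / x)
          - (∑ x ∈ Icc 1 L, (1 : ℝ) / ((x : ℝ) + L))
          + (∑ x ∈ Icc 1 L, (if x = 1 then (6 : ℝ) else 0))
          - (∑ x ∈ Icc 1 L, (1 : ℝ) / (2 * (L : ℝ) - x))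
          - (∑ x ∈ Icc 1 L, (1 : ℝ) / ((x : ℝ) + L - 1)) := by
      rw [hg]
      simp only [Finset.sum_add_distrib, Finset.sum_sub_distrib]
      ring
    have hcard : (Icc 1 L).card = L := by
      rw [Nat.card_Icc]; omega
    -- bounds for the small sums
    have small : ∀ h : ℕ → ℝ, (∀ x ∈ Icc 1 L, h x ≤ 1 / (L : ℝ)) →
        ∑ x ∈ Icc 1 L, h x ≤ 1 := by
      intro h hh
      calc ∑ x ∈ Icc 1 L, h x ≤ (Icc 1 L).card • (1 / (L : ℝ)) :=
            Finset.sum_le_card_nsmul _ _ _ hh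
        _ = 1 := by
            rw [hcard, nsmul_eq_mul]
            field_simp
    have hS2 : ∑ x ∈ Icc 1 L, (1 : ℝ) / (2 * (L : ℝ) + 1 - x) ≤ 1 := by
      apply small
      intro x hx
      simp only [mem_Icc] at hx
      have h1 : (x : ℝ) ≤ (L : ℝ) := by exact_mod_cast hx.2
      exact one_div_le_one_div_of_le hLpos (by linarith)
    have hS5 : ∑ x ∈ Icc 1 L, (1 : ℝ) / ((x : ℝ) + L) ≤ 1 := by
      apply small
      intro x hx
      simp only [mem_Icc] at hx
      have h1 : (1 : ℝ) ≤ (x : ℝ) := by exact_mod_cast hx.1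
      exact one_div_le_one_div_of_le hLpos (by linarith)
    have hS7 : ∑ x ∈ Icc 1 L, (1 : ℝ) / (2 * (L : ℝ) - x) ≤ 1 := by
      apply small
      intro x hx
      simp only [mem_Icc] at hx
      have h1 : (x : ℝ) ≤ (L : ℝ) := by exact_mod_cast hx.2
      exact one_div_le_one_div_of_le hLpos (by linarith)
    have hS8 : ∑ x ∈ Icc 1 L, (1 : ℝ) / ((x : ℝ) + L - 1) ≤ 1 := by
      apply small
      intro x hx
      simp only [mem_Icc] at hx
      have h1 : (1 : ℝ) ≤ (x : ℝ) := by exact_mod_cast hx.1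
      exact one_div_le_one_div_of_le hLpos (by linarith)
    have hI3 : ∑ x ∈ Icc 1 L, (if x = L then (6 : ℝ) else 0) = 6 := by
      rw [Finset.sum_ite_eq' (Icc 1 L) L (fun _ => (6 : ℝ))]
      rw [if_pos (Finset.mem_Icc.mpr ⟨hL, le_refl L⟩)]
    have hI6 : ∑ x ∈ Icc 1 L, (if x = 1 then (6 : ℝ) else 0) = 6 := by
      rw [Finset.sum_ite_eq' (Icc 1 L) 1 (fun _ => (6 : ℝ))]
      rw [if_pos (Finset.mem_Icc.mpr ⟨le_refl 1, hL⟩)]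
    have hharm : Real.log L ≤ ∑ x ∈ Icc 1 L, (1 : ℝ) / x := by
      have h1 := log_le_harmonic L
      have h2 : Real.log L ≤ Real.log ((L : ℝ) + 1) :=
        Real.log_le_log hLpos (by linarith)
      linarith
    have hS1 : Real.log L ≤ ∑ x ∈ Icc 1 L, (1 : ℝ) / ((L : ℝ) + 1 - x) := by
      rw [reflect_sum]
      exact hharm
    rw [hsplit]
    linarith
  calc 2 * Real.log L + 8 ≤ ∑ x ∈ Icc 1 L, g x := hgsum
    _ ≤ _ := hsum
end

section
/- Let 0 < α ≤ 1/2 and let h(x) = x^α. Let a, b > 0 with b/a sufficiently large. Then for every n ≥ 2 and all reals x₁, …, x_{n−1}, y with 1 ≤ x_i ≤ y, one has b·h(y) + (b−a)·Σ_{i=1}^{n−1} h(x_i) ≥ b·h(y + Σ_{i=1}^{n−1} x_i). -/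
open Finset

/-- Concavity step: `(u+s)^α ≤ u^α + α u^(α-1) s`. -/
lemma rpow_add_le_aux {α : ℝ} (hα0 : 0 < α) (hα1 : α ≤ 1) {u s : ℝ}
    (hu : 0 < u) (hs : 0 ≤ s) :
    (u + s) ^ α ≤ u ^ α + α * u ^ (α - 1) * s := by
  have h1 : u + s = u * (1 + s / u) := by field_simp
  have h2 : (0:ℝ) ≤ 1 + s / u := by positivity
  have hb := rpow_one_add_le_one_add_mul_self
      (s := s / u) (by linarith [div_nonneg hs hu.le]) hα0.le hα1
  calc (u + s) ^ α = u ^ α * (1 + s / u) ^ α := by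
        rw [h1, Real.mul_rpow hu.le h2]
    _ ≤ u ^ α * (1 + α * (s / u)) := by
        exact mul_le_mul_of_nonneg_left hb (Real.rpow_nonneg hu.le α)
    _ = u ^ α + α * (u ^ α / u) * s := by ring
    _ = u ^ α + α * u ^ (α - 1) * s := by
        rw [← Real.rpow_sub_one hu.ne']

lemma sum_aux {α : ℝ} (hα0 : 0 < α) (hα1 : α ≤ 1) {ι : Type*} (s : Finset ι)
    (x : ι → ℝ) (y : ℝ) (hy : 0 < y) (hx : ∀ i ∈ s, 1 ≤ x i ∧ x i ≤ y) :
    (y + ∑ i ∈ s, x i) ^ α ≤ y ^ α + α * ∑ i ∈ s, (x i) ^ α := by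
  induction s using Finset.cons_induction with
  | empty => simp
  | cons j t hj ih =>
    have hxt : ∀ i ∈ t, 1 ≤ x i ∧ x i ≤ y := fun i hi => hx i (Finset.mem_cons_of_mem hi)
    have hsum : 0 ≤ ∑ i ∈ t, x i :=
      Finset.sum_nonneg fun i hi => le_trans zero_le_one (hxt i hi).1
    have hxj := hx j (Finset.mem_cons_self j t)
    have hxj0 : 0 < x j := lt_of_lt_of_le zero_lt_one hxj.1
    have hyt : 0 < y + ∑ i ∈ t, x i := by linarith
    rw [Finset.sum_cons, Finset.sum_cons]
    have step : (y + (x j + ∑ i ∈ t, x i)) ^ α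
        ≤ (y + ∑ i ∈ t, x i) ^ α + α * (y + ∑ i ∈ t, x i) ^ (α - 1) * x j := by
      have := rpow_add_le_aux hα0 hα1 hyt hxj0.le
      calc (y + (x j + ∑ i ∈ t, x i)) ^ α
          = ((y + ∑ i ∈ t, x i) + x j) ^ α := by ring_nf
        _ ≤ _ := this
    have hmono : (y + ∑ i ∈ t, x i) ^ (α - 1) ≤ (x j) ^ (α - 1) :=
      Real.rpow_le_rpow_of_nonpos hxj0 (by linarith [hxj.2]) (by linarith)
    have hterm : (y + ∑ i ∈ t, x i) ^ (α - 1) * x j ≤ (x j) ^ α := by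
      calc (y + ∑ i ∈ t, x i) ^ (α - 1) * x j ≤ (x j) ^ (α - 1) * x j :=
            mul_le_mul_of_nonneg_right hmono hxj0.le
        _ = (x j) ^ α := by
            rw [Real.rpow_sub_one hxj0.ne']; field_simp
    have ihh := ih hxt
    have : α * ((y + ∑ i ∈ t, x i) ^ (α - 1) * x j) ≤ α * (x j) ^ α :=
      mul_le_mul_of_nonneg_left hterm hα0.le
    calc (y + (x j + ∑ i ∈ t, x i)) ^ α
        ≤ (y + ∑ i ∈ t, x i) ^ α + α * (y + ∑ i ∈ t, x i) ^ (α - 1) * x j := step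
      _ ≤ (y ^ α + α * ∑ i ∈ t, (x i) ^ α) + α * (x j) ^ α := by
          have := mul_assoc α ((y + ∑ i ∈ t, x i) ^ (α - 1)) (x j)
          linarith
      _ = y ^ α + α * ((x j) ^ α + ∑ i ∈ t, (x i) ^ α) := by ring

/-- Superadditivity with loss for `h(x) = x^α`, `α ∈ (0,1/2]`: for `b/a` large
enough, `b h(y) + (b−a) Σ h(xᵢ) ≥ b h(y + Σ xᵢ)` whenever `1 ≤ xᵢ ≤ y`. -/
theorem superadditivity_with_loss (α : ℝ) (hα0 : 0 < α) (hα : α ≤ 1 / 2) :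
    ∃ C : ℝ, 0 < C ∧ ∀ a b : ℝ, 0 < a → 0 < b → C ≤ b / a →
      ∀ n : ℕ, 2 ≤ n → ∀ (x : Fin (n - 1) → ℝ) (y : ℝ),
        (∀ i, 1 ≤ x i ∧ x i ≤ y) →
        b * y ^ α + (b - a) * ∑ i, (x i) ^ α
          ≥ b * (y + ∑ i, x i) ^ α := by
  refine ⟨2, by norm_num, fun a b ha hb hC n hn x y hx => ?_⟩
  have hab : 2 * a ≤ b := by
    rw [le_div_iff₀ ha] at hC; linarith
  have hn1 : 1 ≤ n - 1 := by omega
  have i0 : Fin (n - 1) := ⟨0, by omega⟩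
  have hy : 0 < y := lt_of_lt_of_le zero_lt_one (le_trans (hx i0).1 (hx i0).2)
  have key := sum_aux hα0 (by linarith) Finset.univ x y hy (fun i _ => hx i)
  have hsx : 0 ≤ ∑ i, (x i) ^ α :=
    Finset.sum_nonneg fun i _ =>
      Real.rpow_nonneg (le_trans zero_le_one (hx i).1) α
  have h1 : b * (y + ∑ i, x i) ^ α ≤ b * (y ^ α + α * ∑ i, (x i) ^ α) :=
    mul_le_mul_of_nonneg_left key hb.le
  have h2 : b * α ≤ b - a := by nlinarith
  nlinarith [mul_le_mul_of_nonneg_right h2 hsx]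
end

section
/- Arrow equivalence: let S₁ ≺ S₂ ≺ … ≺ S_n be a sequence of disjoint intervals ('squares') on ℝ, each with a mass |Sᵢ| > 0. Define an 'old arrow' from S to S' if |S| ≤ |S'| (with ties broken by left-to-right order) and dist(S,S') ≤ c|S|³. Define 'new arrows' by keeping, for each square and each direction (left/right), only the old arrow to the nearest target and erasing the rest. Then a set of squares is connected under new arrows (as undirected edges) if and only if it is connected under old arrows. -/
/-- Number of integer points strictly between `u` and `v`. -/
noncomputable def intGap (u v : ℝ) : ℕ :=
  (Set.Ioo u v ∩ Set.range ((↑) : ℤ → ℝ)).ncard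

/-- Distance between the squares `i` and `j` (intervals `[a i, b i]`, ordered
left to right): the number of integer points strictly between them. -/
noncomputable def sqDist {n : ℕ} (a b : Fin n → ℝ) (i j : Fin n) : ℕ :=
  if i < j then intGap (b i) (a j) else intGap (b j) (a i)

/-- Old arrow from square `i` to square `j`: `|Sᵢ| ≤ |Sⱼ|` (ties broken by the
left-to-right order) and `dist(Sᵢ,Sⱼ) ≤ c |Sᵢ|³`. -/
noncomputable def oldArrow {n : ℕ} (a b : Fin n → ℝ) (m : Fin n → ℕ) (c : ℝ)
    (i j : Fin n) : Prop :=
  (m i < m j ∨ (m i = m j ∧ i < j)) ∧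
    (sqDist a b i j : ℝ) ≤ c * (m i : ℝ) ^ 3

/-- New arrow: an old arrow from `i` to `j` which is minimal in its direction,
i.e. there is no old arrow from `i` to a square strictly between `i` and `j`. -/
noncomputable def newArrow {n : ℕ} (a b : Fin n → ℝ) (m : Fin n → ℕ) (c : ℝ)
    (i j : Fin n) : Prop :=
  oldArrow a b m c i j ∧
    ∀ k : Fin n, ((i < k ∧ k < j) ∨ (j < k ∧ k < i)) → ¬ oldArrow a b m c i k

lemma intGap_finite (u v : ℝ) : (Set.Ioo u v ∩ Set.range ((↑) : ℤ → ℝ)).Finite := by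
  have hsub : Set.Ioo u v ∩ Set.range ((↑) : ℤ → ℝ) ⊆
      ((↑) : ℤ → ℝ) '' Set.Icc ⌈u⌉ ⌊v⌋ := by
    rintro x ⟨⟨hu, hv⟩, z, rfl⟩
    exact ⟨z, ⟨Int.ceil_le.mpr hu.le, Int.le_floor.mpr hv.le⟩, rfl⟩
  exact ((Set.finite_Icc _ _).image _).subset hsub

lemma intGap_mono {u u' v v' : ℝ} (hu : u ≤ u') (hv : v' ≤ v) :
    intGap u' v' ≤ intGap u v :=
  Set.ncard_le_ncard
    (Set.inter_subset_inter_left _ (Set.Ioo_subset_Ioo hu hv)) (intGap_finite u v)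

lemma sqDist_symm {n : ℕ} (a b : Fin n → ℝ) (i j : Fin n) :
    sqDist a b i j = sqDist a b j i := by
  unfold sqDist
  rcases lt_trichotomy i j with h | rfl | h
  · rw [if_pos h, if_neg (asymm h)]
  · rfl
  · rw [if_neg (asymm h), if_pos h]

lemma sqDist_between {n : ℕ} (a b : Fin n → ℝ)
    (hab : ∀ i, a i ≤ b i) (horder : ∀ i j : Fin n, i < j → b i < a j)
    {i j k : Fin n} (hbet : (i < k ∧ k < j) ∨ (j < k ∧ k < i)) :
    sqDist a b k j ≤ sqDist a b i j := by
  rcases hbet with ⟨h1, h2⟩ | ⟨h1, h2⟩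
  · rw [sqDist, if_pos h2, sqDist, if_pos (h1.trans h2)]
    exact intGap_mono ((horder i k h1).le.trans (hab k)) le_rfl
  · rw [sqDist, if_neg (asymm h1), sqDist, if_neg (asymm (h1.trans h2))]
    exact intGap_mono le_rfl ((hab k).trans (horder k i h2).le)

lemma oldArrow_mass_le {n : ℕ} {a b : Fin n → ℝ} {m : Fin n → ℕ} {c : ℝ}
    {i j : Fin n} (h : oldArrow a b m c i j) : m i ≤ m j := by
  rcases h.1 with h | ⟨h, _⟩
  · exact h.le
  · exact h.le

lemma cube_mono {c : ℝ} (hc : 0 < c) {x y : ℕ} (h : x ≤ y) :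
    c * (x : ℝ) ^ 3 ≤ c * (y : ℝ) ^ 3 := by
  have : (x : ℝ) ≤ (y : ℝ) := Nat.cast_le.mpr h
  have := pow_le_pow_left₀ (by positivity) this 3
  nlinarith

lemma old_to_new {n : ℕ} (a b : Fin n → ℝ)
    (hab : ∀ i, a i ≤ b i) (horder : ∀ i j : Fin n, i < j → b i < a j)
    (m : Fin n → ℕ) (c : ℝ) (hc : 0 < c) :
    ∀ d : ℕ, ∀ i j : Fin n, Nat.dist i.val j.val ≤ d → oldArrow a b m c i j →
      Relation.ReflTransGen
        (fun u v => newArrow a b m c u v ∨ newArrow a b m c v u) i j := by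
  intro d
  induction d using Nat.strong_induction_on with
  | _ d IH =>
    intro i j hd hij
    by_cases hk : ∃ k : Fin n, ((i < k ∧ k < j) ∨ (j < k ∧ k < i)) ∧ oldArrow a b m c i k
    · obtain ⟨k, hbet, hik⟩ := hk
      have hik' : i.val < k.val ∨ k.val < i.val := by
        rcases hbet with ⟨h1, _⟩ | ⟨_, h2⟩
        · exact Or.inl h1
        · exact Or.inr h2
      have hvals : (i.val < k.val ∧ k.val < j.val) ∨ (j.val < k.val ∧ k.val < i.val) := by
        rcases hbet with ⟨h1, h2⟩ | ⟨h1, h2⟩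
        · exact Or.inl ⟨h1, h2⟩
        · exact Or.inr ⟨h1, h2⟩
      have hdik : Nat.dist i.val k.val < Nat.dist i.val j.val := by
        simp only [Nat.dist]; omega
      have hdkj : Nat.dist k.val j.val < Nat.dist i.val j.val := by
        simp only [Nat.dist]; omega
      have step1 := IH _ (lt_of_lt_of_le hdik hd) i k le_rfl hik
      -- bound on the distance from k to j
      have hsd : (sqDist a b k j : ℝ) ≤ c * (m i : ℝ) ^ 3 :=
        le_trans (Nat.cast_le.mpr (sqDist_between a b hab horder hbet)) hij.2
      have hmik : m i ≤ m k := oldArrow_mass_le hik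
      have hmij : m i ≤ m j := oldArrow_mass_le hij
      have hedge : oldArrow a b m c k j ∨ oldArrow a b m c j k := by
        have hkj : k ≠ j := by
          rcases hbet with ⟨_, h2⟩ | ⟨h1, _⟩
          · exact ne_of_lt h2
          · exact ne_of_gt h1
        have hsd' : (sqDist a b j k : ℝ) ≤ c * (m i : ℝ) ^ 3 := by
          rwa [sqDist_symm]
        rcases lt_trichotomy (m k) (m j) with h | h | h
        · exact Or.inl ⟨Or.inl h, hsd.trans (cube_mono hc hmik)⟩
        · rcases lt_or_gt_of_ne hkj with hlt | hgt
          · exact Or.inl ⟨Or.inr ⟨h, hlt⟩, hsd.trans (cube_mono hc hmik)⟩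
          · exact Or.inr ⟨Or.inr ⟨h.symm, hgt⟩, hsd'.trans (cube_mono hc hmij)⟩
        · exact Or.inr ⟨Or.inl h, hsd'.trans (cube_mono hc hmij)⟩
      have step2 : Relation.ReflTransGen
          (fun u v => newArrow a b m c u v ∨ newArrow a b m c v u) k j := by
        rcases hedge with h | h
        · exact IH _ (lt_of_lt_of_le hdkj hd) k j le_rfl h
        · have := IH _ (lt_of_lt_of_le (by rwa [Nat.dist_comm]) hd) j k le_rfl h
          exact (@Relation.ReflTransGen.stdSymm _ _
            ⟨fun u v huv => huv.symm⟩).symm _ _ this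
      exact step1.trans step2
    · push_neg at hk
      exact Relation.ReflTransGen.single (Or.inl ⟨hij, fun k hbet => hk k hbet⟩)

/-- Arrow equivalence (Lemma D.1): connectivity under new arrows coincides with
connectivity under old arrows. -/
theorem new_connected_iff_old_connected (n : ℕ) (a b : Fin n → ℝ)
    (hab : ∀ i, a i ≤ b i) (horder : ∀ i j : Fin n, i < j → b i < a j)
    (m : Fin n → ℕ) (hm : ∀ i, 0 < m i) (c : ℝ) (hc : 0 < c) :
    ∀ i j : Fin n,
      Relation.ReflTransGen
          (fun u v => newArrow a b m c u v ∨ newArrow a b m c v u) i j ↔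
        Relation.ReflTransGen
          (fun u v => oldArrow a b m c u v ∨ oldArrow a b m c v u) i j := by
  intro i j
  constructor
  · exact Relation.ReflTransGen.mono (fun u v (huv : newArrow a b m c u v ∨ newArrow a b m c v u) => huv.imp (·.1) (·.1)) i j
  · intro h
    induction h with
    | refl => exact Relation.ReflTransGen.refl
    | @tail u v hprev hstep ih =>
      refine ih.trans ?_
      rcases hstep with h | h
      · exact old_to_new a b hab horder m c hc _ u v le_rfl h
      · exact (@Relation.ReflTransGen.stdSymm _ _ ⟨fun x y hxy => hxy.symm⟩).symm _ _
          (old_to_new a b hab horder m c hc _ v u le_rfl h)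
end
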